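/- arXiv:1711.04615 — 2 statements merged into one kernel-verified Lean document; each statement's English description precedes it below -/
import Mathlib

section
/- For events A, B, C with P̲(C) ≠ 0: P̲(A ∪ B | C) ≥ P̲(A | C) + P̲(B | C) − P̲(A ∩ B | C), where P̲(E | C) = P̲(E ∩ C)/P̲(C). -/
open MeasureTheory Set

def Tplus {X : Type*} (T : X → Set X) (A : Set X) : Set X := {x | T x ⊆ A}
def Tinv {X : Type*} (T : X → Set X) (A : Set X) : Set X := {x | (T x ∩ A).Nonempty}

theorem stmt12 {X : Type*} [MeasurableSpace X] (P : Measure X) [IsProbabilityMeasure P]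
    (T : X → Set X) (hT : ∀ x, (T x).Nonempty) (A B C : Set X)
    (hA : MeasurableSet (Tplus T (A ∩ C))) (hB : MeasurableSet (Tplus T (B ∩ C)))
    (hC : (P (Tplus T C)).toReal ≠ 0) :
    (P (Tplus T ((A ∪ B) ∩ C))).toReal / (P (Tplus T C)).toReal ≥
      (P (Tplus T (A ∩ C))).toReal / (P (Tplus T C)).toReal
      + (P (Tplus T (B ∩ C))).toReal / (P (Tplus T C)).toReal
      - (P (Tplus T (A ∩ B ∩ C))).toReal / (P (Tplus T C)).toReal := by
  have hint : Tplus T (A ∩ C) ∩ Tplus T (B ∩ C) = Tplus T (A ∩ B ∩ C) := by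
    ext x
    simp only [Tplus, mem_inter_iff, mem_setOf_eq, subset_inter_iff]
    tauto
  have hsub : Tplus T (A ∩ C) ∪ Tplus T (B ∩ C) ⊆ Tplus T ((A ∪ B) ∩ C) := by
    rintro x (hx | hx) <;> intro y hy <;>
      exact ⟨by simp [(hx hy).1], (hx hy).2⟩
  have key : P (Tplus T (A ∩ C)) + P (Tplus T (B ∩ C))
      ≤ P (Tplus T ((A ∪ B) ∩ C)) + P (Tplus T (A ∩ B ∩ C)) := by
    rw [← measure_union_add_inter _ hB, hint]
    gcongr
  have fin : ∀ s : Set X, P s ≠ ⊤ := fun s => measure_ne_top P s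
  have keyR : (P (Tplus T (A ∩ C))).toReal + (P (Tplus T (B ∩ C))).toReal
      ≤ (P (Tplus T ((A ∪ B) ∩ C))).toReal + (P (Tplus T (A ∩ B ∩ C))).toReal := by
    rw [← ENNReal.toReal_add (fin _) (fin _), ← ENNReal.toReal_add (fin _) (fin _)]
    exact ENNReal.toReal_mono (by simp [fin]) key
  have hCpos : (0:ℝ) < (P (Tplus T C)).toReal :=
    lt_of_le_of_ne ENNReal.toReal_nonneg (Ne.symm hC)
  rw [ge_iff_le, ← add_div, ← sub_div, div_le_div_iff₀ hCpos hCpos]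
  nlinarith [hCpos]
end

section
/- For events A, B, C with P̄(C) ≠ 0: P̄(A ∪ B | C) ≤ P̄(A | C) + P̄(B | C) − P̄(A ∩ B | C), where P̄(E | C) = P̄(E ∩ C)/P̄(C). -/
open MeasureTheory Set

theorem stmt13 {X : Type*} [MeasurableSpace X] (P : Measure X) [IsProbabilityMeasure P]
    (T : X → Set X) (hT : ∀ x, (T x).Nonempty) (A B C : Set X)
    (hA : MeasurableSet (Tinv T (A ∩ C))) (hB : MeasurableSet (Tinv T (B ∩ C)))
    (hC : (P (Tinv T C)).toReal ≠ 0) :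
    (P (Tinv T ((A ∪ B) ∩ C))).toReal / (P (Tinv T C)).toReal ≤
      (P (Tinv T (A ∩ C))).toReal / (P (Tinv T C)).toReal
      + (P (Tinv T (B ∩ C))).toReal / (P (Tinv T C)).toReal
      - (P (Tinv T (A ∩ B ∩ C))).toReal / (P (Tinv T C)).toReal := by
  have hCpos : 0 < (P (Tinv T C)).toReal := lt_of_le_of_ne ENNReal.toReal_nonneg (Ne.symm hC)
  have hunion : Tinv T ((A ∪ B) ∩ C) = Tinv T (A ∩ C) ∪ Tinv T (B ∩ C) := by
    ext x
    simp only [Tinv, mem_setOf_eq, mem_union]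
    constructor
    · rintro ⟨y, hy, hyAB, hyC⟩
      rcases hyAB with h | h
      exacts [Or.inl ⟨y, hy, h, hyC⟩, Or.inr ⟨y, hy, h, hyC⟩]
    · rintro (⟨y, hy, hyA, hyC⟩ | ⟨y, hy, hyB, hyC⟩)
      exacts [⟨y, hy, Or.inl hyA, hyC⟩, ⟨y, hy, Or.inr hyB, hyC⟩]
  have hsub : Tinv T (A ∩ B ∩ C) ⊆ Tinv T (A ∩ C) ∩ Tinv T (B ∩ C) := by
    rintro x ⟨y, hy, ⟨hyA, hyB⟩, hyC⟩
    exact ⟨⟨y, hy, hyA, hyC⟩, ⟨y, hy, hyB, hyC⟩⟩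
  have key : P (Tinv T ((A ∪ B) ∩ C)) + P (Tinv T (A ∩ B ∩ C))
      ≤ P (Tinv T (A ∩ C)) + P (Tinv T (B ∩ C)) := by
    rw [hunion]
    calc P (Tinv T (A ∩ C) ∪ Tinv T (B ∩ C)) + P (Tinv T (A ∩ B ∩ C))
        ≤ P (Tinv T (A ∩ C) ∪ Tinv T (B ∩ C)) + P (Tinv T (A ∩ C) ∩ Tinv T (B ∩ C)) := by
          exact add_le_add le_rfl (measure_mono hsub)
      _ = P (Tinv T (A ∩ C)) + P (Tinv T (B ∩ C)) := measure_union_add_inter _ hB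
  have hf : ∀ S : Set X, P S ≠ ⊤ := fun S => measure_ne_top P S
  have key' : (P (Tinv T ((A ∪ B) ∩ C))).toReal + (P (Tinv T (A ∩ B ∩ C))).toReal
      ≤ (P (Tinv T (A ∩ C))).toReal + (P (Tinv T (B ∩ C))).toReal := by
    rw [← ENNReal.toReal_add (hf _) (hf _), ← ENNReal.toReal_add (hf _) (hf _)]
    exact ENNReal.toReal_mono (by simp [ENNReal.add_ne_top, hf]) key
  rw [← add_div, ← sub_div, div_le_div_iff_of_pos_right hCpos]
  linarith
end
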